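/- For every t ∈ [0,1], the 2×2 operator matrix V_t := [[√(1−t)·α₀, −√t·1], [γ₀ + √t·α₀*α₀, √(1−t)·α₀*]] is a unitary operator on ℓ²(ℕ×ℤ) ⊕ ℓ²(ℕ×ℤ); the map t ↦ V_t on [0,1] is continuous in operator norm; and V₀ = [[α₀, 0], [γ₀, α₀*]]. -/

import Mathlib

/-- `ℓ²(ℕ×ℤ)`: the Hilbert space of square-summable complex families indexed by `ℕ × ℤ`. -/
noncomputable abbrev l2NZ : Type := lp (fun _ : ℕ × ℤ => ℂ) 2

/-- The standard orthonormal basis vectors `e_{n,k}` of `ℓ²(ℕ×ℤ)`. -/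
noncomputable def eNZ (n : ℕ) (k : ℤ) : l2NZ := lp.single 2 (n, k) (1 : ℂ)

/-- The Hilbert space direct sum `ℓ²(ℕ×ℤ) ⊕ ℓ²(ℕ×ℤ)`. -/
noncomputable abbrev H2 : Type := WithLp 2 (l2NZ × l2NZ)

/-- The element of `ℓ²(ℕ×ℤ) ⊕ ℓ²(ℕ×ℤ)` with components `x` and `y`. -/
noncomputable def pairH2 (x y : l2NZ) : H2 := (WithLp.equiv 2 (l2NZ × l2NZ)).symm (x, y)

/-- The defining property of the operators `α₀, γ₀` on `ℓ²(ℕ×ℤ)`: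
`α₀ e_{n,k} = e_{n−1,k−1}` for `n ≥ 1`, `α₀ e_{0,k} = 0`, `γ₀ e_{0,k} = e_{0,k−1}`,
and `γ₀ e_{n,k} = 0` for `n ≥ 1`. -/
def IsAlphaGammaZero (α₀ γ₀ : l2NZ →L[ℂ] l2NZ) : Prop :=
  (∀ (n : ℕ) (k : ℤ), α₀ (eNZ (n + 1) k) = eNZ n (k - 1)) ∧
  (∀ k : ℤ, α₀ (eNZ 0 k) = 0) ∧
  (∀ k : ℤ, γ₀ (eNZ 0 k) = eNZ 0 (k - 1)) ∧
  (∀ (n : ℕ) (k : ℤ), γ₀ (eNZ (n + 1) k) = 0)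

local notation "⟪" x ", " y "⟫" => inner (𝕜 := ℂ) x y

noncomputable def bNZ : HilbertBasis (ℕ × ℤ) ℂ l2NZ :=
  HilbertBasis.ofRepr (LinearIsometryEquiv.refl ℂ l2NZ)

lemma bNZ_apply (p : ℕ × ℤ) : bNZ p = eNZ p.1 p.2 := by
  apply bNZ.repr.injective
  rw [bNZ.repr_self]
  rfl

lemma inner_eNZ (m n : ℕ) (j k : ℤ) :
    ⟪eNZ m j, eNZ n k⟫ = if m = n ∧ j = k then 1 else 0 := by
  classical
  rw [eNZ, eNZ, lp.inner_single_left, lp.single_apply]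
  rcases eq_or_ne ((m, j) : ℕ × ℤ) (n, k) with hp | hp
  · obtain ⟨h1, h2⟩ := Prod.mk.injEq .. ▸ hp
    simp [h1, h2, RCLike.inner_apply]
  · have : ¬ (m = n ∧ j = k) := by
      intro ⟨h1, h2⟩; exact hp (by simp [h1, h2])
    simp [this, RCLike.inner_apply, lp.single_apply, hp]

lemma eNZ_ext {x y : l2NZ} (hxy : ∀ n k, ⟪eNZ n k, x⟫ = ⟪eNZ n k, y⟫) : x = y := by
  apply bNZ.repr.injective
  ext p
  rw [bNZ.repr_apply_apply, bNZ.repr_apply_apply, bNZ_apply]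
  exact hxy p.1 p.2

lemma clm_ext_eNZ {T S : l2NZ →L[ℂ] l2NZ} (hTS : ∀ n k, T (eNZ n k) = S (eNZ n k)) :
    T = S := by
  refine ContinuousLinearMap.ext_on (s := Set.range (⇑bNZ)) ?_ ?_
  · rw [Submodule.dense_iff_topologicalClosure_eq_top]
    exact bNZ.dense_span
  · rintro _ ⟨p, rfl⟩
    rw [bNZ_apply]
    exact hTS p.1 p.2

open ContinuousLinearMap

section Rel
variable {α₀ γ₀ : l2NZ →L[ℂ] l2NZ} (h : IsAlphaGammaZero α₀ γ₀)
include h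

lemma adj_alpha (n : ℕ) (k : ℤ) : adjoint α₀ (eNZ n k) = eNZ (n + 1) (k + 1) := by
  obtain ⟨ha1, ha0, hg0, hg1⟩ := h
  apply eNZ_ext; intro m j
  rw [ContinuousLinearMap.adjoint_inner_right]
  cases m with
  | zero => rw [ha0, inner_zero_left, inner_eNZ, if_neg (by rintro ⟨h1, -⟩; omega)]
  | succ m =>
    rw [ha1, inner_eNZ, inner_eNZ]
    refine if_congr ⟨fun ⟨h1, h2⟩ => ⟨by omega, by omega⟩,
      fun ⟨h1, h2⟩ => ⟨by omega, by omega⟩⟩ rfl rfl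

lemma adj_gamma_zero (k : ℤ) : adjoint γ₀ (eNZ 0 k) = eNZ 0 (k + 1) := by
  obtain ⟨ha1, ha0, hg0, hg1⟩ := h
  apply eNZ_ext; intro m j
  rw [ContinuousLinearMap.adjoint_inner_right]
  cases m with
  | zero =>
    rw [hg0, inner_eNZ, inner_eNZ]
    refine if_congr ⟨fun ⟨h1, h2⟩ => ⟨by omega, by omega⟩,
      fun ⟨h1, h2⟩ => ⟨by omega, by omega⟩⟩ rfl rfl
  | succ m =>
    rw [hg1, inner_zero_left, inner_eNZ, if_neg (by rintro ⟨h1, -⟩; omega)]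

lemma adj_gamma_succ (n : ℕ) (k : ℤ) : adjoint γ₀ (eNZ (n + 1) k) = 0 := by
  obtain ⟨ha1, ha0, hg0, hg1⟩ := h
  apply eNZ_ext; intro m j
  rw [ContinuousLinearMap.adjoint_inner_right, inner_zero_right]
  cases m with
  | zero => rw [hg0, inner_eNZ, if_neg (by rintro ⟨h1, -⟩; omega)]
  | succ m => rw [hg1, inner_zero_left]

lemma rel_a (x : l2NZ) : adjoint α₀ (α₀ x) + adjoint γ₀ (γ₀ x) = x := by
  have key : (adjoint α₀).comp α₀ + (adjoint γ₀).comp γ₀ = ContinuousLinearMap.id ℂ l2NZ := by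
    apply clm_ext_eNZ; intro n k
    have ⟨ha1, ha0, hg0, hg1⟩ := h
    cases n with
    | zero => simp [ha0, hg0, adj_gamma_zero h]
    | succ n => simp [ha1, hg1, adj_alpha h]
  simpa using DFunLike.congr_fun key x

lemma rel_b (x : l2NZ) : α₀ (adjoint α₀ x) = x := by
  have key : α₀.comp (adjoint α₀) = ContinuousLinearMap.id ℂ l2NZ := by
    apply clm_ext_eNZ; intro n k
    simp [adj_alpha h, h.1]
  simpa using DFunLike.congr_fun key x

lemma rel_c (x : l2NZ) : γ₀ (adjoint γ₀ x) + adjoint α₀ (α₀ x) = x := by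
  have key : γ₀.comp (adjoint γ₀) + (adjoint α₀).comp α₀ = ContinuousLinearMap.id ℂ l2NZ := by
    apply clm_ext_eNZ; intro n k
    have ⟨ha1, ha0, hg0, hg1⟩ := h
    cases n with
    | zero => simp [adj_gamma_zero h, ha0, hg0]
    | succ n => simp [adj_gamma_succ h, ha1, adj_alpha h]
  simpa using DFunLike.congr_fun key x

lemma rel_d (x : l2NZ) : α₀ (γ₀ x) = 0 := by
  have key : α₀.comp γ₀ = 0 := by
    apply clm_ext_eNZ; intro n k
    have ⟨ha1, ha0, hg0, hg1⟩ := h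
    cases n with
    | zero => simp [hg0, ha0]
    | succ n => simp [hg1]
  simpa using DFunLike.congr_fun key x

lemma rel_e (x : l2NZ) : α₀ (adjoint γ₀ x) = 0 := by
  have key : α₀.comp (adjoint γ₀) = 0 := by
    apply clm_ext_eNZ; intro n k
    have ⟨ha1, ha0, hg0, hg1⟩ := h
    cases n with
    | zero => simp [adj_gamma_zero ⟨ha1, ha0, hg0, hg1⟩, ha0]
    | succ n => simp [adj_gamma_succ ⟨ha1, ha0, hg0, hg1⟩]
  simpa using DFunLike.congr_fun key x

lemma rel_f (x : l2NZ) : γ₀ (adjoint α₀ x) = 0 := by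
  have key : γ₀.comp (adjoint α₀) = 0 := by
    apply clm_ext_eNZ; intro n k
    simp [adj_alpha h, h.2.2.2]
  simpa using DFunLike.congr_fun key x

lemma rel_g (x : l2NZ) : adjoint γ₀ (adjoint α₀ x) = 0 := by
  have key : (adjoint γ₀).comp (adjoint α₀) = 0 := by
    apply clm_ext_eNZ; intro n k
    simp [adj_alpha h, adj_gamma_succ h]
  simpa using DFunLike.congr_fun key x

end Rel

lemma pairH2_congr {a b c d : l2NZ} (h1 : a = c) (h2 : b = d) :
    pairH2 a b = pairH2 c d := by rw [h1, h2]

lemma pairH2_add (x y u v : l2NZ) : pairH2 x y + pairH2 u v = pairH2 (x + u) (y + v) := rfl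

lemma pairH2_smul (c : ℂ) (x y : l2NZ) : c • pairH2 x y = pairH2 (c • x) (c • y) := rfl

lemma adjV_apply {α₀ γ₀ : l2NZ →L[ℂ] l2NZ} (h : IsAlphaGammaZero α₀ γ₀)
    (V : ℝ → (H2 →L[ℂ] H2))
    (hV : ∀ t ∈ Set.Icc (0 : ℝ) 1, ∀ x y : l2NZ,
      V t (pairH2 x y) =
        pairH2 ((Real.sqrt (1 - t) : ℂ) • α₀ x - (Real.sqrt t : ℂ) • y)
          (γ₀ x + (Real.sqrt t : ℂ) • adjoint α₀ (α₀ x)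
            + (Real.sqrt (1 - t) : ℂ) • adjoint α₀ y))
    {t : ℝ} (ht : t ∈ Set.Icc (0 : ℝ) 1) (x y : l2NZ) :
    adjoint (V t) (pairH2 x y) =
      pairH2 ((Real.sqrt (1 - t) : ℂ) • adjoint α₀ x
          + (adjoint γ₀ y + (Real.sqrt t : ℂ) • adjoint α₀ (α₀ y)))
        (-((Real.sqrt t : ℂ) • x) + (Real.sqrt (1 - t) : ℂ) • α₀ y) := by
  apply ext_inner_right ℂ
  intro w
  rw [ContinuousLinearMap.adjoint_inner_left]
  have hw : w = pairH2 w.ofLp.1 w.ofLp.2 := rfl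
  conv_lhs => rw [hw, hV t ht]
  conv_rhs => rw [hw]
  simp only [pairH2, WithLp.prod_inner_apply, WithLp.equiv_symm_apply, WithLp.ofLp_toLp,
    inner_add_left, inner_add_right, inner_sub_right, inner_smul_left, inner_smul_right,
    inner_neg_left, ContinuousLinearMap.adjoint_inner_left,
    ContinuousLinearMap.adjoint_inner_right, Complex.conj_ofReal]
  ring


open ContinuousLinearMap in
/-- **Statement 11.** For every `t ∈ [0,1]`, the 2×2 operator matrix
`V_t = [[√(1−t)·α₀, −√t·1], [γ₀ + √t·α₀*α₀, √(1−t)·α₀*]]` is a unitary operator on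
`ℓ²(ℕ×ℤ) ⊕ ℓ²(ℕ×ℤ)`; the map `t ↦ V_t` is norm-continuous on `[0,1]`; and
`V₀ = [[α₀, 0], [γ₀, α₀*]]`. -/
theorem Vt_unitary_continuous
    (α₀ γ₀ : l2NZ →L[ℂ] l2NZ) (h : IsAlphaGammaZero α₀ γ₀)
    (V : ℝ → (H2 →L[ℂ] H2))
    (hV : ∀ t ∈ Set.Icc (0 : ℝ) 1, ∀ x y : l2NZ,
      V t (pairH2 x y) =
        pairH2 ((Real.sqrt (1 - t) : ℂ) • α₀ x - (Real.sqrt t : ℂ) • y)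
          (γ₀ x + (Real.sqrt t : ℂ) • adjoint α₀ (α₀ x)
            + (Real.sqrt (1 - t) : ℂ) • adjoint α₀ y)) :
    (∀ t ∈ Set.Icc (0 : ℝ) 1,
      adjoint (V t) * V t = 1 ∧ V t * adjoint (V t) = 1) ∧
    ContinuousOn V (Set.Icc (0 : ℝ) 1) ∧
    (∀ x y : l2NZ, V 0 (pairH2 x y) = pairH2 (α₀ x) (γ₀ x + adjoint α₀ y)) := by
  refine ⟨?_, ?_, ?_⟩
  · intro t ht
    have hcs : ((Real.sqrt (1 - t) : ℂ)) * (Real.sqrt (1 - t) : ℂ)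
        + ((Real.sqrt t : ℂ)) * (Real.sqrt t : ℂ) = 1 := by
      rw [← Complex.ofReal_mul, ← Complex.ofReal_mul, ← Complex.ofReal_add,
        Real.mul_self_sqrt (by linarith [ht.2]), Real.mul_self_sqrt ht.1]
      norm_num
    constructor
    · apply ContinuousLinearMap.ext
      intro z
      have hz : z = pairH2 z.ofLp.1 z.ofLp.2 := rfl
      rw [ContinuousLinearMap.mul_apply, ContinuousLinearMap.one_apply]
      conv_lhs => rw [hz, hV t ht, adjV_apply h V hV ht]
      conv_rhs => rw [hz]
      refine pairH2_congr ?_ ?_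
      · simp only [map_add, map_smul, map_sub, map_zero, map_neg, rel_b h, rel_d h, rel_e h,
          rel_f h, rel_g h, smul_zero, add_zero, zero_add]
        conv_rhs => rw [← rel_a h z.ofLp.1]
        match_scalars <;> first | ring1 | linear_combination hcs | linear_combination -hcs
      · simp only [map_add, map_smul, map_sub, map_zero, map_neg, rel_b h, rel_d h, rel_e h,
          rel_f h, rel_g h, smul_zero, add_zero, zero_add]
        match_scalars <;> first | ring1 | linear_combination hcs | linear_combination -hcs
    · apply ContinuousLinearMap.ext
      intro z
      have hz : z = pairH2 z.ofLp.1 z.ofLp.2 := rfl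
      rw [ContinuousLinearMap.mul_apply, ContinuousLinearMap.one_apply]
      conv_lhs => rw [hz, adjV_apply h V hV ht, hV t ht]
      conv_rhs => rw [hz]
      refine pairH2_congr ?_ ?_
      · simp only [map_add, map_smul, map_sub, map_zero, map_neg, rel_b h, rel_d h, rel_e h,
          rel_f h, rel_g h, smul_zero, add_zero, zero_add]
        match_scalars <;> first | ring1 | linear_combination hcs | linear_combination -hcs
      · simp only [map_add, map_smul, map_sub, map_zero, map_neg, rel_b h, rel_d h, rel_e h,
          rel_f h, rel_g h, smul_zero, add_zero, zero_add]
        conv_rhs => rw [← rel_c h z.ofLp.2]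
        match_scalars <;> first | ring1 | linear_combination hcs | linear_combination -hcs
  · set mk2 : (l2NZ →L[ℂ] l2NZ) → (l2NZ →L[ℂ] l2NZ) → (l2NZ →L[ℂ] l2NZ) →
        (l2NZ →L[ℂ] l2NZ) → (H2 →L[ℂ] H2) := fun a b c d =>
      ((WithLp.prodContinuousLinearEquiv 2 ℂ l2NZ l2NZ).symm :
          l2NZ × l2NZ →L[ℂ] H2) ∘L
        (((a ∘L ContinuousLinearMap.fst ℂ l2NZ l2NZ)
            + (b ∘L ContinuousLinearMap.snd ℂ l2NZ l2NZ)).prod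
         ((c ∘L ContinuousLinearMap.fst ℂ l2NZ l2NZ)
            + (d ∘L ContinuousLinearMap.snd ℂ l2NZ l2NZ))) ∘L
        ((WithLp.prodContinuousLinearEquiv 2 ℂ l2NZ l2NZ) : H2 →L[ℂ] l2NZ × l2NZ)
      with hmk2def
    have hmk2 : ∀ (a b c d : l2NZ →L[ℂ] l2NZ) (x y : l2NZ),
        mk2 a b c d (pairH2 x y) = pairH2 (a x + b y) (c x + d y) := fun _ _ _ _ _ _ => rfl
    set W : ℝ → (H2 →L[ℂ] H2) := fun t =>
      ((Real.sqrt (1 - t) : ℂ)) • mk2 α₀ 0 0 (adjoint α₀) +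
      ((Real.sqrt t : ℂ)) • mk2 0 (-1) ((adjoint α₀) ∘L α₀) 0 +
      mk2 0 0 γ₀ 0 with hWdef
    have hWc : Continuous W := by
      refine Continuous.add (Continuous.add ?_ ?_) continuous_const
      · exact (Complex.continuous_ofReal.comp (Real.continuous_sqrt.comp
          (continuous_const.sub continuous_id))).smul continuous_const
      · exact (Complex.continuous_ofReal.comp Real.continuous_sqrt).smul continuous_const
    refine (hWc.continuousOn).congr ?_
    intro t ht
    apply ContinuousLinearMap.ext
    intro z
    have hz : z = pairH2 z.ofLp.1 z.ofLp.2 := rfl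
    rw [hz, hV t ht]
    simp only [hWdef, ContinuousLinearMap.add_apply, ContinuousLinearMap.smul_apply, hmk2,
      ContinuousLinearMap.zero_apply, ContinuousLinearMap.neg_apply,
      ContinuousLinearMap.one_apply, ContinuousLinearMap.comp_apply,
      pairH2_smul, pairH2_add]
    refine pairH2_congr ?_ ?_ <;> module
  · intro x y
    rw [hV 0 (by constructor <;> norm_num)]
    refine pairH2_congr ?_ ?_ <;>
      norm_num [Real.sqrt_one, Real.sqrt_zero]
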